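/- Fix k ≥ 3, two distinct vertices i and j, and ε > 0. There exists c_1 > 0 such that for every sequence L = L(n) with L(n) > n^{(2−α)(k−2)/2 + ε} and all sufficiently large n, P( the pair {i,j} is an edge of G_n contained in at least L(n) k-cliques of G_n | W_i W_j < μ n ) ≤ exp( − c_1 · L(n)^{1/(k−2)} ). -/

import Mathlib

open MeasureTheory Filter Set
open scoped ENNReal NNReal

noncomputable section

/-- Conditionally on the weights `w`, the IRG edge indicators: the pair `{i,j}` (with
`i < j`, coordinates with `i ≥ j` are irrelevant) is an edge with probability
`min(w_i w_j/(μ n), 1)`, independently over pairs. -/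
def edgeM (μ : ℝ) (n : ℕ) (w : Fin n → ℝ) : Measure (Fin n × Fin n → Bool) :=
  Measure.pi fun p : Fin n × Fin n =>
    (PMF.bernoulli (Real.toNNReal (min (w p.1 * w p.2 / (μ * n)) 1))
      ((Real.toNNReal_le_toNNReal (min_le_right _ _)).trans_eq Real.toNNReal_one)).toMeasure

/-- The joint law of the i.i.d. weights and the conditionally independent edges. -/
def jointM (ν : Measure ℝ) (μ : ℝ) (n : ℕ) :
    Measure ((Fin n → ℝ) × (Fin n × Fin n → Bool)) :=
  (Measure.pi fun _ : Fin n => ν).bind fun w => (edgeM μ n w).map (Prod.mk w)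

/-- Adjacency of `u` and `v` in the graph encoded by `η`. -/
def adjB {n : ℕ} (η : Fin n × Fin n → Bool) (u v : Fin n) : Bool :=
  if u < v then η (u, v) else η (v, u)

/-- The number of `k`-cliques containing both `u` and `v`. -/
def cliquesThrough (k : ℕ) {n : ℕ} (η : Fin n × Fin n → Bool) (u v : Fin n) : ℕ :=
  ((Finset.powersetCard k (Finset.univ : Finset (Fin n))).filter
    (fun S => u ∈ S ∧ v ∈ S ∧ ∀ a ∈ S, ∀ b ∈ S, a < b → η (a, b) = true)).card


lemma bind_apply_ae {α β : Type*} [MeasurableSpace α] [MeasurableSpace β]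
    {m : Measure α} {f : α → Measure β} (hf : AEMeasurable f m) {s : Set β}
    (hs : MeasurableSet s) : m.bind f s = ∫⁻ a, f a s ∂m := by
  have h1 : m.bind f = m.bind (hf.mk f) := by
    unfold Measure.bind
    rw [Measure.map_congr hf.ae_eq_mk]
  rw [h1, Measure.bind_apply hs hf.measurable_mk.aemeasurable]
  refine lintegral_congr_ae ?_
  filter_upwards [hf.ae_eq_mk] with a ha
  rw [ha]

lemma lintegral_pi_prod {ι : Type*} [Fintype ι] [DecidableEq ι] {X : Type*}
    [MeasurableSpace X] [Nonempty X] (ν : Measure X) [IsProbabilityMeasure ν]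
    (f : ι → X → ℝ≥0∞) (hf : ∀ c, Measurable (f c)) :
    ∫⁻ w, ∏ c, f c (w c) ∂(Measure.pi fun _ : ι => ν) = ∏ c, ∫⁻ x, f c x ∂ν := by
  have hFm : Measurable fun w : ι → X => ∏ c, f c (w c) :=
    Finset.measurable_prod _ fun c _ => (hf c).comp (measurable_pi_apply c)
  have key : ∀ s : Finset ι, ∀ x : ι → X,
      (∫⋯∫⁻_s, (fun w => ∏ c, f c (w c)) ∂(fun _ => ν)) x
        = (∏ c ∈ s, ∫⁻ y, f c y ∂ν) * ∏ c ∈ sᶜ, f c (x c) := by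
    intro s
    induction s using Finset.induction_on with
    | empty => intro x; simp [lmarginal_empty]
    | @insert a s ha ih =>
      intro x
      rw [lmarginal_insert _ hFm ha]
      have hupd : ∀ t : X, ∏ c ∈ sᶜ, f c (Function.update x a t c)
          = f a t * ∏ c ∈ sᶜ.erase a, f c (x c) := by
        intro t
        have ha' : a ∈ sᶜ := by simpa using ha
        rw [← Finset.mul_prod_erase _ _ ha', Function.update_self]
        congr 1
        refine Finset.prod_congr rfl fun c hc => ?_
        rw [Function.update_of_ne (Finset.ne_of_mem_erase hc)]
      calc ∫⁻ t, (∫⋯∫⁻_s, (fun w => ∏ c, f c (w c)) ∂fun _ => ν) (Function.update x a t) ∂ν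
          = ∫⁻ t, ((∏ c ∈ s, ∫⁻ y, f c y ∂ν) * ∏ c ∈ sᶜ.erase a, f c (x c)) * f a t ∂ν := by
            refine lintegral_congr fun t => ?_
            rw [ih, hupd]; ring
        _ = ((∏ c ∈ s, ∫⁻ y, f c y ∂ν) * ∏ c ∈ sᶜ.erase a, f c (x c)) * ∫⁻ t, f a t ∂ν := by
            rw [lintegral_const_mul _ (hf a)]
        _ = (∏ c ∈ insert a s, ∫⁻ y, f c y ∂ν) * ∏ c ∈ (insert a s)ᶜ, f c (x c) := by
            rw [Finset.prod_insert ha, Finset.compl_insert]; ring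
  obtain ⟨x₀⟩ := (inferInstance : Nonempty X)
  rw [lintegral_eq_lmarginal_univ (fun _ => x₀), key Finset.univ (fun _ => x₀)]
  simp

lemma pi_cylinder {ι : Type*} [Fintype ι] [DecidableEq ι] {X : Type*} [MeasurableSpace X]
    (ν : Measure X) [IsProbabilityMeasure ν] (c : ι) (B : Set X) :
    Measure.pi (fun _ : ι => ν) {w : ι → X | w c ∈ B} = ν B := by
  have : {w : ι → X | w c ∈ B} = univ.pi (fun d => if d = c then B else univ) := by
    ext w
    simp only [Set.mem_setOf_eq, Set.mem_pi, Set.mem_univ, forall_true_left]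
    constructor
    · intro h d; by_cases hd : d = c <;> simp [hd, h]
    · intro h; have := h c; simpa using this
  rw [this, Measure.pi_pi]
  simp [apply_ite ν, Finset.prod_ite_eq']





/-- the common neighbours of `u` and `v` other than `u,v` themselves -/
def commonN {n : ℕ} (η : Fin n × Fin n → Bool) (u v : Fin n) : Finset (Fin n) :=
  ((Finset.univ.erase u).erase v).filter
    (fun l => adjB η u l = true ∧ adjB η v l = true)

lemma cliquesThrough_le_choose {n k : ℕ} (η : Fin n × Fin n → Bool) (u v : Fin n)
    (huv : u ≠ v) (hk : 2 ≤ k) :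
    cliquesThrough k η u v ≤ (commonN η u v).card.choose (k - 2) := by
  classical
  rw [← Finset.card_powersetCard]
  apply Finset.card_le_card_of_injOn (fun S => (S.erase u).erase v)
  · intro S hS
    simp only [Finset.mem_coe, Finset.mem_filter, Finset.mem_powersetCard] at hS
    obtain ⟨⟨-, hcard⟩, hu, hv, hcl⟩ := hS
    rw [Finset.mem_coe, Finset.mem_powersetCard]
    constructor
    · intro l hl
      have hlv : l ≠ v := Finset.ne_of_mem_erase hl
      have hl' := Finset.mem_of_mem_erase hl
      have hlu : l ≠ u := Finset.ne_of_mem_erase hl'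
      have hlS : l ∈ S := Finset.mem_of_mem_erase hl'
      have hadj : ∀ z ∈ S, z ≠ l → adjB η z l = true := by
        intro z hz hzl
        rcases lt_or_gt_of_ne hzl with h | h
        · simpa [adjB, h] using hcl z hz l hlS h
        · have := hcl l hlS z hz h
          simp only [adjB, if_neg (not_lt_of_gt h)]
          exact this
      refine Finset.mem_filter.mpr ⟨?_, hadj u hu hlu.symm, hadj v hv hlv.symm⟩
      exact Finset.mem_erase.mpr ⟨hlv, Finset.mem_erase.mpr ⟨hlu, Finset.mem_univ l⟩⟩
    · have hvS : v ∈ S.erase u := Finset.mem_erase.mpr ⟨huv.symm, hv⟩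
      rw [Finset.card_erase_of_mem hvS, Finset.card_erase_of_mem hu, hcard]
      omega
  · intro S₁ hS₁ S₂ hS₂ h
    simp only [Finset.coe_filter, Set.mem_setOf_eq, Finset.mem_powersetCard] at hS₁ hS₂
    obtain ⟨-, hu₁, hv₁, -⟩ := hS₁
    obtain ⟨-, hu₂, hv₂, -⟩ := hS₂
    have e1 : ∀ (S : Finset (Fin n)), u ∈ S → v ∈ S →
        insert u (insert v ((S.erase u).erase v)) = S := by
      intro S hu hv
      rw [Finset.insert_erase (Finset.mem_erase.mpr ⟨huv.symm, hv⟩), Finset.insert_erase hu]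
    simp only at h
    rw [← e1 S₁ hu₁ hv₁, ← e1 S₂ hu₂ hv₂, h]

lemma measurableSet_edge {n : ℕ} (A : Set (Fin n × Fin n → Bool)) : MeasurableSet A := by
  have : Countable (Fin n × Fin n → Bool) := inferInstance
  exact A.to_countable.measurableSet

lemma min_mul_min_le {p q : ℝ} (hp : 0 ≤ p) (hq : 0 ≤ q) :
    min p 1 * min q 1 ≤ min (p * q) 1 := by
  rcases le_or_gt p 1 with h1 | h1 <;> rcases le_or_gt q 1 with h2 | h2
  · rw [min_eq_left h1, min_eq_left h2]
    exact le_min (le_refl _) (by nlinarith)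
  · rw [min_eq_left h1, min_eq_right h2.le]
    rw [mul_one]
    exact le_min (le_mul_of_one_le_right hp h2.le) h1
  · rw [min_eq_right h1.le, min_eq_left h2, one_mul]
    exact le_min (le_mul_of_one_le_left hq h1.le) h2
  · rw [min_eq_right h1.le, min_eq_right h2.le, one_mul]
    exact le_min (by nlinarith) le_rfl

lemma min_le_rpow {y β : ℝ} (hy : 0 ≤ y) (hβ0 : 0 < β) (hβ1 : β ≤ 1) :
    min y 1 ≤ y ^ β := by
  rcases le_or_gt y 1 with h | h
  · rw [min_eq_left h]
    rcases eq_or_lt_of_le hy with h0 | h0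
    · rw [← h0, Real.zero_rpow hβ0.ne']
    · calc y = y ^ (1:ℝ) := (Real.rpow_one y).symm
        _ ≤ y ^ β := Real.rpow_le_rpow_of_exponent_ge h0 h hβ1
  · rw [min_eq_right h.le]
    exact Real.one_le_rpow h.le hβ0.le |>.trans_eq rfl



lemma tail_bound {α : ℝ} (hα : 0 < α) {ν : Measure ℝ} [IsProbabilityMeasure ν]
    (htail : Tendsto (fun x : ℝ => x ^ α * (ν (Set.Ioi x)).toReal) atTop (nhds 1)) :
    ∃ C : ℝ, 1 ≤ C ∧ ∀ x : ℝ, 0 < x → ν (Set.Ioi x) ≤ ENNReal.ofReal (C * x ^ (-α)) := by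
  have h2 : ∀ᶠ x : ℝ in atTop, x ^ α * (ν (Set.Ioi x)).toReal ≤ 2 :=
    htail.eventually (eventually_le_nhds (by norm_num))
  obtain ⟨x₀, hx₀⟩ := h2.exists_forall_of_atTop
  set y : ℝ := max x₀ 1 with hy
  have hy1 : (1:ℝ) ≤ y := le_max_right _ _
  refine ⟨max 2 (y ^ α), le_trans (by norm_num) (le_max_left _ _), ?_⟩
  intro x hx
  have hfin : ν (Set.Ioi x) ≠ ⊤ := measure_ne_top ν _
  have hxar : (0:ℝ) < x ^ (-α) := Real.rpow_pos_of_pos hx _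
  rcases le_or_gt y x with hcase | hcase
  · have hx1 : x₀ ≤ x := le_trans (le_max_left _ _) hcase
    have htl := hx₀ x hx1
    have hxa : (0:ℝ) < x ^ α := Real.rpow_pos_of_pos hx _
    have hstep : (ν (Set.Ioi x)).toReal ≤ 2 * x ^ (-α) := by
      have h1 : (ν (Set.Ioi x)).toReal ≤ 2 / x ^ α := (le_div_iff₀ hxa).mpr (by linarith)
      have h2' : (2:ℝ) / x ^ α = 2 * x ^ (-α) := by
        rw [Real.rpow_neg hx.le, div_eq_mul_inv]
      linarith [h1, h2'.le]
    rw [← ENNReal.ofReal_toReal hfin]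
    refine ENNReal.ofReal_le_ofReal (hstep.trans ?_)
    have h3 : (2:ℝ) ≤ max 2 (y ^ α) := le_max_left _ _
    nlinarith
  · have h1 : ν (Set.Ioi x) ≤ 1 := prob_le_one
    have hya : (1:ℝ) ≤ y ^ α * x ^ (-α) := by
      rw [Real.rpow_neg hx.le, ← div_eq_mul_inv, le_div_iff₀ (Real.rpow_pos_of_pos hx _)]
      rw [one_mul]
      exact Real.rpow_le_rpow hx.le hcase.le hα.le
    calc ν (Set.Ioi x) ≤ 1 := h1
      _ ≤ ENNReal.ofReal (y ^ α * x ^ (-α)) := by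
          rw [← ENNReal.ofReal_one]; exact ENNReal.ofReal_le_ofReal hya
      _ ≤ ENNReal.ofReal (max 2 (y ^ α) * x ^ (-α)) := by
          apply ENNReal.ofReal_le_ofReal
          exact mul_le_mul_of_nonneg_right (le_max_right _ _) hxar.le

lemma moment_lt_top {α γ C : ℝ} (hγ : 0 < γ) (hγα : γ < α) (hC1 : 1 ≤ C) {ν : Measure ℝ}
    [IsProbabilityMeasure ν] (hsupp : ν (Set.Iio 1) = 0)
    (hC : ∀ x : ℝ, 0 < x → ν (Set.Ioi x) ≤ ENNReal.ofReal (C * x ^ (-α))) :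
    ∫⁻ x, ENNReal.ofReal (x ^ γ) ∂ν < ⊤ := by
  have hae : ∀ᵐ x ∂ν, (1:ℝ) ≤ x := by
    refine (ae_iff).mpr ?_
    simpa [Set.Iio, not_le] using hsupp
  have hnn : 0 ≤ᵐ[ν] (id : ℝ → ℝ) := by
    filter_upwards [hae] with x hx; exact le_trans zero_le_one hx
  have hkey := MeasureTheory.lintegral_rpow_eq_lintegral_meas_lt_mul ν hnn aemeasurable_id hγ
  simp only [id] at hkey
  rw [hkey]
  rw [← Set.Ioc_union_Ioi_eq_Ioi (zero_le_one' ℝ), lintegral_union measurableSet_Ioi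
    (Set.Ioc_disjoint_Ioi le_rfl)]
  refine ENNReal.mul_lt_top ENNReal.ofReal_lt_top ?_
  have hI1 : (∫⁻ t in Set.Ioc (0:ℝ) 1, ν {a | t < a} * ENNReal.ofReal (t ^ (γ - 1))) < ⊤ := by
    have hb : ∀ t ∈ Set.Ioc (0:ℝ) 1, ν {a | t < a} * ENNReal.ofReal (t ^ (γ - 1))
        ≤ ENNReal.ofReal (t ^ (γ - 1)) := fun t _ => by
      calc ν {a | t < a} * ENNReal.ofReal (t ^ (γ - 1))
          ≤ 1 * ENNReal.ofReal (t ^ (γ - 1)) := mul_le_mul_left prob_le_one _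
        _ = _ := one_mul _
    refine lt_of_le_of_lt (setLIntegral_mono' measurableSet_Ioc hb) ?_
    have hint : IntegrableOn (fun t : ℝ => t ^ (γ - 1)) (Set.Ioc 0 1) := by
      have h := intervalIntegral.intervalIntegrable_rpow' (a := (0:ℝ)) (b := 1) (r := γ - 1)
        (by linarith)
      rwa [intervalIntegrable_iff, Set.uIoc_of_le (zero_le_one' ℝ)] at h
    exact hint.lintegral_lt_top
  have hI2 : (∫⁻ t in Set.Ioi (1:ℝ), ν {a | t < a} * ENNReal.ofReal (t ^ (γ - 1))) < ⊤ := by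
    have hb : ∀ t ∈ Set.Ioi (1:ℝ), ν {a | t < a} * ENNReal.ofReal (t ^ (γ - 1))
        ≤ ENNReal.ofReal (C * t ^ (γ - 1 - α)) := by
      intro t ht
      have ht0 : (0:ℝ) < t := lt_trans zero_lt_one ht
      have h1 : ν {a | t < a} ≤ ENNReal.ofReal (C * t ^ (-α)) := hC t ht0
      calc ν {a | t < a} * ENNReal.ofReal (t ^ (γ - 1))
          ≤ ENNReal.ofReal (C * t ^ (-α)) * ENNReal.ofReal (t ^ (γ - 1)) :=
            mul_le_mul_left h1 _
        _ = ENNReal.ofReal (C * t ^ (-α) * t ^ (γ - 1)) := by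
            rw [← ENNReal.ofReal_mul]
            positivity
        _ = ENNReal.ofReal (C * t ^ (γ - 1 - α)) := by
            rw [mul_assoc, ← Real.rpow_add ht0]
            ring_nf
    refine lt_of_le_of_lt (setLIntegral_mono' measurableSet_Ioi hb) ?_
    have hint : IntegrableOn (fun t : ℝ => C * t ^ (γ - 1 - α)) (Set.Ioi 1) := by
      exact (integrableOn_Ioi_rpow_of_lt (by linarith) zero_lt_one).const_mul C
    exact hint.lintegral_lt_top
  exact ENNReal.add_lt_top.mpr ⟨hI1, hI2⟩







def pr {n : ℕ} (u v : Fin n) : Fin n × Fin n := if u < v then (u, v) else (v, u)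

lemma adjB_eq_pr {n : ℕ} (η : Fin n × Fin n → Bool) (u v : Fin n) :
    adjB η u v = η (pr u v) := by
  unfold adjB pr
  split <;> rfl

lemma pr_inj {n : ℕ} {u l l' : Fin n} (h1 : l ≠ u) (h2 : l' ≠ u)
    (h : pr u l = pr u l') : l = l' := by
  unfold pr at h
  split at h <;> split at h <;>
    simp only [Prod.mk.injEq] at h <;> tauto

lemma pr_ne {n : ℕ} {u v l l' : Fin n} (huv : u ≠ v) (h2 : l' ≠ u) :
    pr u l ≠ pr v l' := by
  unfold pr
  split <;> split <;> intro h <;> rw [Prod.mk.injEq] at h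
  · exact huv h.1
  · exact h2 h.1.symm
  · exact h2 h.2.symm
  · exact huv h.2

def ET {n : ℕ} (u v : Fin n) (T : Finset (Fin n)) : Set (Fin n × Fin n → Bool) :=
  {η | ∀ l ∈ T, η (pr u l) = true ∧ η (pr v l) = true}

lemma edgeM_ET {n : ℕ} (μ : ℝ) (w : Fin n → ℝ) {i' j' : Fin n} (hij : i' ≠ j')
    (T : Finset (Fin n)) (hT : ∀ l ∈ T, l ≠ i' ∧ l ≠ j') :
    edgeM μ n w (ET i' j' T) =
      ∏ l ∈ T, (ENNReal.ofReal (min (w i' * w l / (μ * n)) 1) *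
        ENNReal.ofReal (min (w j' * w l / (μ * n)) 1)) := by
  classical
  set θ : Fin n × Fin n → ℝ≥0∞ :=
    fun p => ENNReal.ofReal (min (w p.1 * w p.2 / (μ * n)) 1) with hθ
  set prs : Finset (Fin n × Fin n) := T.image (pr i') ∪ T.image (pr j') with hprs
  have hset : ET i' j' T = Set.pi Set.univ
      (fun p => if p ∈ prs then ({true} : Set Bool) else Set.univ) := by
    ext η
    simp only [ET, Set.mem_setOf_eq, Set.mem_pi, Set.mem_univ, forall_true_left]
    constructor
    · intro h p
      by_cases hp : p ∈ prs
      · simp only [if_pos hp]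
        simp only [hprs, Finset.mem_union, Finset.mem_image] at hp
        rcases hp with ⟨l, hl, rfl⟩ | ⟨l, hl, rfl⟩
        · exact (h l hl).1
        · exact (h l hl).2
      · simp [if_neg hp]
    · intro h l hl
      constructor
      · have hmem : pr i' l ∈ prs :=
          Finset.mem_union_left _ (Finset.mem_image_of_mem _ hl)
        have := h (pr i' l)
        rw [if_pos hmem] at this
        simpa using this
      · have hmem : pr j' l ∈ prs :=
          Finset.mem_union_right _ (Finset.mem_image_of_mem _ hl)
        have := h (pr j' l)
        rw [if_pos hmem] at this
        simpa using this
  rw [hset, edgeM, Measure.pi_pi]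
  have hval : ∀ p : Fin n × Fin n,
      (PMF.bernoulli (Real.toNNReal (min (w p.1 * w p.2 / (μ * n)) 1))
        ((Real.toNNReal_le_toNNReal (min_le_right _ _)).trans_eq Real.toNNReal_one)).toMeasure
        (if p ∈ prs then ({true} : Set Bool) else Set.univ)
      = if p ∈ prs then θ p else 1 := by
    intro p
    split
    · rw [PMF.toMeasure_apply_singleton _ _ (measurableSet_singleton _)]
      rw [PMF.bernoulli_apply]; rfl
    · exact measure_univ
  rw [Finset.prod_congr rfl (fun p _ => hval p), Finset.prod_ite_mem,
    Finset.univ_inter, hprs]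
  have hdisj : Disjoint (T.image (pr i')) (T.image (pr j')) := by
    rw [Finset.disjoint_left]
    rintro p hp1 hp2
    simp only [Finset.mem_image] at hp1 hp2
    obtain ⟨l, hl, rfl⟩ := hp1
    obtain ⟨l', hl', he⟩ := hp2
    exact pr_ne hij (hT l' hl').1 he.symm
  rw [Finset.prod_union hdisj,
    Finset.prod_image (fun l hl l' hl' h => pr_inj (hT l hl).1 (hT l' hl').1 h),
    Finset.prod_image (fun l hl l' hl' h => pr_inj (hT l hl).2 (hT l' hl').2 h),
    ← Finset.prod_mul_distrib]
  refine Finset.prod_congr rfl fun l hl => ?_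
  have hv : ∀ u : Fin n, θ (pr u l) = ENNReal.ofReal (min (w u * w l / (μ * n)) 1) := by
    intro u
    unfold pr
    split
    · rfl
    · simp only [hθ, mul_comm (w l) (w u)]
  rw [hv i', hv j']

lemma edge_prob_bound (μ : ℝ) {n : ℕ} (w : Fin n → ℝ) {i' j' : Fin n} (hij : i' ≠ j')
    (m' : ℕ) (A : Set (Fin n × Fin n → Bool))
    (hA : ∀ η ∈ A, m' ≤ (commonN η i' j').card) :
    edgeM μ n w A ≤
      ∑ T ∈ Finset.powersetCard m' ((Finset.univ.erase i').erase j'),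
        ∏ l ∈ T, (ENNReal.ofReal (min (w i' * w l / (μ * n)) 1) *
          ENNReal.ofReal (min (w j' * w l / (μ * n)) 1)) := by
  classical
  have hsub : A ⊆ ⋃ T ∈ Finset.powersetCard m' ((Finset.univ.erase i').erase j'),
      ET i' j' T := by
    intro η hη
    obtain ⟨T, hTsub, hTcard⟩ := Finset.exists_subset_card_eq (hA η hη)
    have hTN : T ⊆ (Finset.univ.erase i').erase j' :=
      hTsub.trans (Finset.filter_subset _ _)
    refine Set.mem_biUnion (Finset.mem_powersetCard.mpr ⟨hTN, hTcard⟩) ?_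
    intro l hl
    have hlN := hTsub hl
    simp only [commonN, Finset.mem_filter] at hlN
    obtain ⟨-, h1, h2⟩ := hlN
    rw [adjB_eq_pr] at h1 h2
    exact ⟨h1, h2⟩
  calc edgeM μ n w A ≤ edgeM μ n w (⋃ T ∈ Finset.powersetCard m'
        ((Finset.univ.erase i').erase j'), ET i' j' T) := measure_mono hsub
    _ ≤ ∑ T ∈ Finset.powersetCard m' ((Finset.univ.erase i').erase j'),
        edgeM μ n w (ET i' j' T) := measure_biUnion_finset_le _ _
    _ ≤ _ := by
        refine Finset.sum_le_sum fun T hT => ?_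
        have hTN : T ⊆ (Finset.univ.erase i').erase j' :=
          (Finset.mem_powersetCard.mp hT).1
        refine le_of_eq (edgeM_ET μ w hij T fun l hl => ?_)
        have := hTN hl
        simp only [Finset.mem_erase] at this
        exact ⟨this.2.1, this.1⟩



lemma final_real_bound {n m' N : ℕ} {q m : ℝ} (hq : 0 ≤ q) (hm1 : 1 ≤ m)
    (hmm' : m ≤ (m' : ℝ)) (hm'1 : 1 ≤ m') (hNn : N ≤ n)
    (hkey : Real.exp 3 * ((n : ℝ) * q) ≤ (m' : ℝ)) :
    2 * (N.choose m' : ℝ) * q ^ m' ≤ Real.exp (-m) := by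
  have hm'pos : (0:ℝ) < (m' : ℝ) := by exact_mod_cast hm'1
  have hfac : (0:ℝ) < (m'.factorial : ℝ) := by exact_mod_cast m'.factorial_pos
  have h1 : (N.choose m' : ℝ) * (m'.factorial : ℝ) ≤ (n : ℝ) ^ m' := by
    have hnat : N.choose m' * m'.factorial ≤ n ^ m' := by
      calc N.choose m' * m'.factorial = m'.factorial * N.choose m' := mul_comm _ _
        _ = N.descFactorial m' := (Nat.descFactorial_eq_factorial_mul_choose _ _).symm
        _ ≤ N ^ m' := Nat.descFactorial_le_pow _ _
        _ ≤ n ^ m' := Nat.pow_le_pow_left hNn _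
    exact_mod_cast hnat
  have h2 : ((m' : ℝ)) ^ m' / (m'.factorial : ℝ) ≤ Real.exp (m' : ℝ) := by
    have hsum := Real.sum_le_exp_of_nonneg (x := (m' : ℝ)) hm'pos.le (m' + 1)
    refine le_trans ?_ hsum
    exact Finset.single_le_sum (f := fun i => (m' : ℝ) ^ i / (i.factorial : ℝ))
      (fun i _ => by positivity) (Finset.self_mem_range_succ m')
  have hbase : Real.exp 1 * ((n : ℝ) * q) / (m' : ℝ) ≤ Real.exp (-2) := by
    rw [div_le_iff₀ hm'pos]
    have he3 : Real.exp 1 * ((n:ℝ) * q) = Real.exp (-2) * (Real.exp 3 * ((n:ℝ) * q)) := by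
      have hee : Real.exp (-2) * Real.exp 3 = Real.exp 1 := by
        rw [← Real.exp_add]; norm_num
      rw [← hee]; ring
    rw [he3]
    have := mul_le_mul_of_nonneg_left hkey (Real.exp_pos (-2)).le
    linarith
  have hnq0 : 0 ≤ (n:ℝ) * q := by positivity
  calc 2 * (N.choose m' : ℝ) * q ^ m'
      ≤ 2 * ((n : ℝ) ^ m' / (m'.factorial : ℝ)) * q ^ m' := by
        have : (N.choose m' : ℝ) ≤ (n : ℝ) ^ m' / (m'.factorial : ℝ) :=
          (le_div_iff₀ hfac).mpr h1
        have hqp : (0:ℝ) ≤ q ^ m' := by positivity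
        nlinarith
    _ = 2 * (((n:ℝ) * q) ^ m' / (m'.factorial : ℝ)) := by
        rw [mul_pow]; ring
    _ ≤ 2 * (((n:ℝ) * q) ^ m' * (Real.exp (m' : ℝ) / ((m' : ℝ)) ^ m')) := by
        have hp : (0:ℝ) < ((m':ℝ)) ^ m' := by positivity
        have h3 : 1 / (m'.factorial : ℝ) ≤ Real.exp (m' : ℝ) / ((m' : ℝ)) ^ m' := by
          rw [div_le_div_iff₀ hfac hp, one_mul]
          calc ((m':ℝ)) ^ m' = ((m':ℝ)) ^ m' / (m'.factorial : ℝ) * (m'.factorial : ℝ) := by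
                field_simp
            _ ≤ Real.exp (m' : ℝ) * (m'.factorial : ℝ) :=
                mul_le_mul_of_nonneg_right h2 hfac.le
        have hnqp : (0:ℝ) ≤ ((n:ℝ) * q) ^ m' := by positivity
        calc 2 * (((n:ℝ) * q) ^ m' / (m'.factorial : ℝ))
            = 2 * (((n:ℝ) * q) ^ m' * (1 / (m'.factorial : ℝ))) := by ring
          _ ≤ 2 * (((n:ℝ) * q) ^ m' * (Real.exp (m' : ℝ) / ((m' : ℝ)) ^ m')) := by
              nlinarith
    _ = 2 * (Real.exp 1 * ((n:ℝ) * q) / (m' : ℝ)) ^ m' := by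
        rw [div_pow, mul_pow, mul_pow, Real.exp_one_pow]
        ring
    _ ≤ 2 * (Real.exp (-2)) ^ m' := by
        have h4 : (0:ℝ) ≤ Real.exp 1 * ((n:ℝ) * q) / (m' : ℝ) := by positivity
        have := pow_le_pow_left₀ h4 hbase m'
        linarith
    _ = 2 * Real.exp ((m' : ℝ) * (-2)) := by rw [← Real.exp_nat_mul]
    _ ≤ Real.exp (-m) := by
        have hx : (2:ℝ) ≤ Real.exp (2 * (m' : ℝ) - m) := by
          have h5 : (1:ℝ) + 1 ≤ Real.exp 1 := by linarith [Real.add_one_le_exp (1:ℝ)]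
          have h6 : Real.exp 1 ≤ Real.exp (2 * (m' : ℝ) - m) :=
            Real.exp_le_exp.mpr (by linarith)
          linarith
        have h7 : Real.exp ((m' : ℝ) * (-2)) * Real.exp (2 * (m' : ℝ) - m)
            = Real.exp (-m) := by
          rw [← Real.exp_add]; ring_nf
        nlinarith [Real.exp_pos ((m' : ℝ) * (-2))]



lemma card_ge {n k : ℕ} (hk : 3 ≤ k) {η : Fin n × Fin n → Bool} {i' j' : Fin n}
    (hij : i' ≠ j') {Lr : ℝ} (hLr : 0 ≤ Lr)
    (hcl : Lr ≤ (cliquesThrough k η i' j' : ℝ)) :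
    Lr ^ (1 / ((k:ℝ) - 2)) ≤ ((commonN η i' j').card : ℝ) := by
  have hk2 : (2:ℕ) ≤ k := by omega
  have hkR : (1:ℝ) ≤ (k:ℝ) - 2 := by
    have : (3:ℝ) ≤ (k:ℝ) := by exact_mod_cast hk
    linarith
  have hkpos : (0:ℝ) < (k:ℝ) - 2 := by linarith
  set c : ℝ := ((commonN η i' j').card : ℝ) with hc
  have hc0 : (0:ℝ) ≤ c := Nat.cast_nonneg _
  have h1 : cliquesThrough k η i' j' ≤ (commonN η i' j').card ^ (k - 2) :=
    le_trans (cliquesThrough_le_choose η i' j' hij hk2) (Nat.choose_le_pow _ _)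
  have h2 : Lr ≤ c ^ ((k:ℝ) - 2) := by
    have hcast : ((commonN η i' j').card ^ (k-2) : ℝ) = c ^ ((k:ℝ) - 2) := by
      rw [← Real.rpow_natCast c (k-2)]
      congr 1
      rw [Nat.cast_sub hk2]
      norm_num
    calc Lr ≤ (cliquesThrough k η i' j' : ℝ) := hcl
      _ ≤ ((commonN η i' j').card ^ (k-2) : ℝ) := by exact_mod_cast h1
      _ = c ^ ((k:ℝ) - 2) := hcast
  calc Lr ^ (1 / ((k:ℝ) - 2)) ≤ (c ^ ((k:ℝ) - 2)) ^ (1 / ((k:ℝ) - 2)) :=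
        Real.rpow_le_rpow hLr h2 (by positivity)
    _ = c := by
        rw [← Real.rpow_mul hc0, mul_one_div, div_self hkpos.ne', Real.rpow_one]

theorem stmt11
    (α : ℝ) (hα : α ∈ Set.Ioo (1 : ℝ) 2)
    (ν : Measure ℝ) [IsProbabilityMeasure ν]
    (hsupp : ν (Set.Iio 1) = 0)
    (htail : Tendsto (fun x : ℝ => x ^ α * (ν (Set.Ioi x)).toReal) atTop (nhds 1))
    (hint : Integrable (fun x : ℝ => x) ν)
    (μ : ℝ) (hμ : μ = ∫ x, x ∂ν)
    (k : ℕ) (hk : 3 ≤ k)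
    (i j : ℕ) (hij : i ≠ j)
    (ε : ℝ) (hε : 0 < ε) :
    ∃ c₁ : ℝ, 0 < c₁ ∧
      ∀ L : ℕ → ℝ,
        (∀ n : ℕ, (n : ℝ) ^ ((2 - α) * ((k : ℝ) - 2) / 2 + ε) < L n) →
        ∀ᶠ n : ℕ in atTop, ∀ (hi : i < n) (hj : j < n),
          ProbabilityTheory.cond (jointM ν μ n)
              {p | p.1 ⟨i, hi⟩ * p.1 ⟨j, hj⟩ < μ * n}
              {p | adjB p.2 ⟨i, hi⟩ ⟨j, hj⟩ = true ∧
                L n ≤ (cliquesThrough k p.2 ⟨i, hi⟩ ⟨j, hj⟩ : ℝ)} ≤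
            ENNReal.ofReal (Real.exp (-(c₁ * L n ^ (1 / ((k : ℝ) - 2))))) := by
  obtain ⟨hα1, hα2⟩ := hα
  refine ⟨1, one_pos, ?_⟩
  intro L hL
  classical
  -- parameters
  have hkR : (1:ℝ) ≤ (k:ℝ) - 2 := by
    have : (3:ℝ) ≤ (k:ℝ) := by exact_mod_cast hk
    linarith
  have hkpos : (0:ℝ) < (k:ℝ) - 2 := by linarith
  set ε' : ℝ := ε / ((k:ℝ) - 2) with hε'def
  have hε' : 0 < ε' := div_pos hε hkpos
  set δ : ℝ := min ε' 1 with hδdef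
  have hδ0 : 0 < δ := lt_min hε' one_pos
  have hδ1 : δ ≤ 1 := min_le_right _ _
  have hδε' : δ ≤ ε' := min_le_left _ _
  set γ : ℝ := α - δ / 2 with hγdef
  have hγ0 : 0 < γ := by simp only [hγdef]; linarith
  have hγα : γ < α := by simp only [hγdef]; linarith
  have hγhalf0 : 0 < γ / 2 := by linarith
  have hγhalf1 : γ / 2 ≤ 1 := by linarith
  -- tail constant and moment
  obtain ⟨C₀, hC₀1, hC₀⟩ := tail_bound (by linarith : (0:ℝ) < α) htail
  set Mγ : ℝ≥0∞ := ∫⁻ x, ENNReal.ofReal (x ^ γ) ∂ν with hMγdef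
  have hMγ : Mγ < ⊤ := moment_lt_top hγ0 hγα hC₀1 hsupp hC₀
  set M : ℝ := Mγ.toReal + 1 with hMdef
  have hM1 : 1 ≤ M := by
    have : 0 ≤ Mγ.toReal := ENNReal.toReal_nonneg
    simp only [hMdef]; linarith
  have hMγM : Mγ ≤ ENNReal.ofReal M := by
    rw [← ENNReal.ofReal_toReal hMγ.ne]
    exact ENNReal.ofReal_le_ofReal (by simp only [hMdef]; linarith)
  -- a.e. weight bound and the mean
  have hae1 : ∀ᵐ x ∂ν, (1:ℝ) ≤ x := by
    refine (ae_iff).mpr ?_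
    simpa [Set.Iio, not_le] using hsupp
  have hμ1 : 1 ≤ μ := by
    rw [hμ]
    have h1 : ∫ _x, (1:ℝ) ∂ν ≤ ∫ x, x ∂ν := integral_mono_ae (integrable_const 1) hint hae1
    simpa using h1
  have hμpos : (0:ℝ) < μ := by linarith
  -- tail goes to zero
  have htoReal0 : Tendsto (fun x : ℝ => (ν (Set.Ioi x)).toReal) atTop (nhds 0) := by
    have h := htail.mul (tendsto_rpow_neg_atTop (by linarith : (0:ℝ) < α))
    rw [mul_zero] at h
    refine h.congr' ?_
    filter_upwards [eventually_ge_atTop (1:ℝ)] with x hx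
    have hx0 : (0:ℝ) < x := by linarith
    rw [mul_comm (x ^ α), mul_assoc, ← Real.rpow_add hx0]
    simp
  -- EV1 : the tail at √(μ n)/2 is eventually ≤ 1/4
  have hsqrt : Tendsto (fun n : ℕ => Real.sqrt (μ * n) / 2) atTop atTop := by
    apply Tendsto.atTop_div_const two_pos
    have hsq0 : Tendsto Real.sqrt atTop atTop :=
      (tendsto_rpow_atTop (by norm_num : (0:ℝ) < 1/2)).congr
        (fun x => (Real.sqrt_eq_rpow x).symm)
    exact hsq0.comp ((tendsto_natCast_atTop_atTop).const_mul_atTop hμpos)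
  have EV1 : ∀ᶠ n : ℕ in atTop,
      (ν (Set.Ioi (Real.sqrt (μ * n) / 2))).toReal ≤ 1/4 :=
    hsqrt.eventually (htoReal0.eventually (eventually_le_nhds (by norm_num)))
  -- EV2 : the Chernoff condition
  have EV2 : ∀ᶠ n : ℕ in atTop,
      Real.exp 3 * (M * μ ^ (-(γ/2))) * (n:ℝ) ^ (1 - γ/2) ≤ (n:ℝ) ^ ((2-α)/2 + ε') := by
    have hg : 0 < ε' - δ/4 := by linarith
    have h1 : Tendsto (fun n : ℕ => (n:ℝ) ^ (ε' - δ/4)) atTop atTop :=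
      (tendsto_rpow_atTop hg).comp tendsto_natCast_atTop_atTop
    filter_upwards [h1.eventually_ge_atTop (Real.exp 3 * (M * μ ^ (-(γ/2)))),
      eventually_ge_atTop 1] with n hK hn1
    have hn0 : (0:ℝ) < (n:ℝ) := by
      have : (1:ℕ) ≤ n := hn1
      exact_mod_cast Nat.lt_of_lt_of_le Nat.zero_lt_one this
    have hexp : (2-α)/2 + ε' = (1 - γ/2) + (ε' - δ/4) := by
      simp only [hγdef]; ring
    rw [hexp, Real.rpow_add hn0]
    have hpow0 : (0:ℝ) ≤ (n:ℝ) ^ (1 - γ/2) := (Real.rpow_pos_of_pos hn0 _).le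
    calc Real.exp 3 * (M * μ ^ (-(γ/2))) * (n:ℝ) ^ (1 - γ/2)
        ≤ (n:ℝ) ^ (ε' - δ/4) * (n:ℝ) ^ (1 - γ/2) := mul_le_mul_of_nonneg_right hK hpow0
      _ = (n:ℝ) ^ (1 - γ/2) * (n:ℝ) ^ (ε' - δ/4) := mul_comm _ _
  -- main eventual statement
  filter_upwards [EV1, EV2, eventually_ge_atTop 1] with n hEV1 hEV2 hn1
  intro hi hj
  set i' : Fin n := (⟨i, hi⟩ : Fin n) with hi'def
  set j' : Fin n := (⟨j, hj⟩ : Fin n) with hj'def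
  have hij' : i' ≠ j' := by
    intro h
    exact hij (congrArg Fin.val h)
  have hnR1 : (1:ℝ) ≤ (n:ℝ) := by exact_mod_cast hn1
  have hnR0 : (0:ℝ) < (n:ℝ) := by linarith
  have hs0 : (0:ℝ) < μ * n := by positivity
  have hs1 : (1:ℝ) ≤ μ * n := one_le_mul_of_one_le_of_one_le hμ1 hnR1
  -- abbreviations
  set P : Measure (Fin n → ℝ) := Measure.pi (fun _ : Fin n => ν) with hPdef
  set f : (Fin n → ℝ) → Measure ((Fin n → ℝ) × (Fin n × Fin n → Bool)) :=
    fun w => (edgeM μ n w).map (Prod.mk w) with hfdef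
  have hjm : jointM ν μ n = P.bind f := rfl
  set s : Set ((Fin n → ℝ) × (Fin n × Fin n → Bool)) :=
    {p | p.1 i' * p.1 j' < μ * n} with hsdef
  set t : Set ((Fin n → ℝ) × (Fin n × Fin n → Bool)) :=
    {p | adjB p.2 i' j' = true ∧ L n ≤ (cliquesThrough k p.2 i' j' : ℝ)} with htdef
  have hsm : MeasurableSet s := by
    apply measurableSet_lt
    · exact ((measurable_pi_apply i').comp measurable_fst).mul
        ((measurable_pi_apply j').comp measurable_fst)
    · exact measurable_const
  have htm : MeasurableSet t := by
    have ht2 : t = Prod.snd ⁻¹'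
        {η : Fin n × Fin n → Bool | adjB η i' j' = true ∧
          L n ≤ (cliquesThrough k η i' j' : ℝ)} := rfl
    rw [ht2]
    exact measurable_snd (measurableSet_edge _)
  by_cases hmeas : AEMeasurable f P
  swap
  · have h0 : jointM ν μ n = 0 := by
      rw [hjm]
      unfold Measure.bind
      rw [Measure.map_of_not_aemeasurable hmeas, Measure.join_zero]
    rw [h0]
    simp [ProbabilityTheory.cond]
  -- the weight-marginal of s
  set s' : Set (Fin n → ℝ) := {w | w i' * w j' < μ * n} with hs'def
  have hs'm : MeasurableSet s' :=
    measurableSet_lt ((measurable_pi_apply i').mul (measurable_pi_apply j')) measurable_const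
  have hPedge : ∀ w : Fin n → ℝ, IsProbabilityMeasure (edgeM μ n w) := by
    intro w; unfold edgeM; infer_instance
  have hmk : ∀ (w : Fin n → ℝ) (A : Set ((Fin n → ℝ) × (Fin n × Fin n → Bool))),
      MeasurableSet A → f w A = edgeM μ n w (Prod.mk w ⁻¹' A) := by
    intro w A hA
    simp only [hfdef]
    exact Measure.map_apply measurable_prodMk_left hA
  have Hs : jointM ν μ n s = P s' := by
    rw [hjm, bind_apply_ae hmeas hsm]
    have hptw : ∀ w : Fin n → ℝ, f w s = s'.indicator 1 w := by
      intro w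
      rw [hmk w s hsm]
      by_cases hw : w ∈ s'
      · have : Prod.mk w ⁻¹' s = Set.univ := by
          ext η
          simpa [hsdef, hs'def] using hw
        rw [this]
        have := hPedge w
        simp [Set.indicator_of_mem hw, measure_univ]
      · have hw' : ¬ (w i' * w j' < μ * n) := hw
        have : Prod.mk w ⁻¹' s = ∅ := by
          ext η
          simp [hsdef, hw']
        rw [this]
        simp [Set.indicator_of_notMem hw]
    calc (∫⁻ w, f w s ∂P) = ∫⁻ w, s'.indicator 1 w ∂P := by
          exact lintegral_congr fun w => hptw w
      _ = P s' := lintegral_indicator_one hs'm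
  -- lower bound on P s'
  have HsLB : ENNReal.ofReal (1/2) ≤ P s' := by
    set R : ℝ := Real.sqrt (μ * n) with hRdef
    have hR0 : 0 < R := Real.sqrt_pos.mpr hs0
    have hcompl : P s'ᶜ ≤ ENNReal.ofReal (1/2) := by
      have hsub : s'ᶜ ⊆ {w : Fin n → ℝ | ¬ ∀ c, (1:ℝ) ≤ w c} ∪
          ({w : Fin n → ℝ | w i' ∈ Set.Ici R} ∪ {w : Fin n → ℝ | w j' ∈ Set.Ici R}) := by
        intro w hw
        by_cases hG : ∀ c, (1:ℝ) ≤ w c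
        · right
          by_contra hcon
          simp only [Set.mem_union, Set.mem_setOf_eq, Set.mem_Ici, not_or, not_le] at hcon
          obtain ⟨h1, h2⟩ := hcon
          have : w i' * w j' < R * R := by
            have h1' : (0:ℝ) ≤ w i' := le_trans zero_le_one (hG i')
            have h2' : (0:ℝ) ≤ w j' := le_trans zero_le_one (hG j')
            exact mul_lt_mul'' h1 h2 h1' h2'
          rw [Real.mul_self_sqrt hs0.le] at this
          exact hw this
        · left; exact hG
      have hG0 : P {w : Fin n → ℝ | ¬ ∀ c, (1:ℝ) ≤ w c} = 0 := by
        have hsub2 : {w : Fin n → ℝ | ¬ ∀ c, (1:ℝ) ≤ w c} ⊆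
            ⋃ c, {w : Fin n → ℝ | w c ∈ Set.Iio 1} := by
          intro w hw
          push_neg at hw
          obtain ⟨c, hc⟩ := hw
          exact Set.mem_iUnion.mpr ⟨c, hc⟩
        refine measure_mono_null hsub2 (measure_iUnion_null fun c => ?_)
        rw [hPdef, pi_cylinder]
        exact hsupp
      have htail14 : ∀ c : Fin n, P {w : Fin n → ℝ | w c ∈ Set.Ici R} ≤ ENNReal.ofReal (1/4) := by
        intro c
        rw [hPdef, pi_cylinder]
        have hmono : ν (Set.Ici R) ≤ ν (Set.Ioi (R/2)) :=
          measure_mono (fun x hx => lt_of_lt_of_le (by linarith : R/2 < R) hx)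
        refine le_trans hmono ?_
        rw [ENNReal.le_ofReal_iff_toReal_le (measure_ne_top ν _) (by norm_num)]
        exact hEV1
      calc P s'ᶜ ≤ P ({w : Fin n → ℝ | ¬ ∀ c, (1:ℝ) ≤ w c} ∪
            ({w : Fin n → ℝ | w i' ∈ Set.Ici R} ∪ {w : Fin n → ℝ | w j' ∈ Set.Ici R})) :=
            measure_mono hsub
        _ ≤ P {w : Fin n → ℝ | ¬ ∀ c, (1:ℝ) ≤ w c} +
            (P {w : Fin n → ℝ | w i' ∈ Set.Ici R} + P {w : Fin n → ℝ | w j' ∈ Set.Ici R}) :=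
            le_trans (measure_union_le _ _) (by
              exact add_le_add le_rfl (measure_union_le _ _))
        _ ≤ 0 + (ENNReal.ofReal (1/4) + ENNReal.ofReal (1/4)) := by
            refine add_le_add hG0.le (add_le_add (htail14 i') (htail14 j'))
        _ = ENNReal.ofReal (1/2) := by
            rw [zero_add, ← ENNReal.ofReal_add (by norm_num) (by norm_num)]
            norm_num
    have hsum : P s' + P s'ᶜ = 1 := by
      rw [measure_add_measure_compl hs'm]
      exact measure_univ
    have h1 : (1:ℝ≥0∞) ≤ P s' + ENNReal.ofReal (1/2) := by
      rw [← hsum]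
      exact add_le_add le_rfl hcompl
    have h2 : ENNReal.ofReal (1/2) + ENNReal.ofReal (1/2) ≤ P s' + ENNReal.ofReal (1/2) := by
      refine le_trans ?_ h1
      rw [← ENNReal.ofReal_add (by norm_num) (by norm_num)]
      norm_num
    exact (ENNReal.add_le_add_iff_right ENNReal.ofReal_ne_top).mp h2
    -- the quantities m and m'
  set m : ℝ := L n ^ (1 / ((k:ℝ) - 2)) with hmdef
  have hθpos : 0 < (2 - α) * ((k:ℝ) - 2) / 2 + ε := by
    have h2α : (0:ℝ) < 2 - α := by linarith
    have h3 := mul_pos h2α hkpos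
    linarith
  have hLn1 : (1:ℝ) ≤ L n :=
    le_of_lt (lt_of_le_of_lt (Real.one_le_rpow hnR1 hθpos.le) (hL n))
  have hL0 : (0:ℝ) ≤ L n := by linarith
  have hm1 : (1:ℝ) ≤ m := Real.one_le_rpow hLn1 (by positivity)
  set m' : ℕ := ⌈m⌉₊ with hm'def
  have hm'1 : 1 ≤ m' := Nat.ceil_pos.mpr (by linarith)
  have hmm' : m ≤ (m' : ℝ) := Nat.le_ceil m
  -- φ and Q
  set φ : ℝ → ℝ≥0∞ := fun x => ENNReal.ofReal (min (x^2 / (μ * n)) 1) with hφdef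
  have hφm : Measurable φ := by fun_prop
  set Q : ℝ≥0∞ := ∫⁻ x, φ x ∂ν with hQdef
  set N₂ : Finset (Fin n) := (Finset.univ.erase i').erase j' with hN2def
  -- a.e. pointwise bound on f w (s ∩ t)
  have hbnd : ∀ᵐ w ∂P, f w (s ∩ t) ≤
      ∑ T ∈ Finset.powersetCard m' N₂, ∏ l ∈ T, φ (w l) := by
    have hGae : ∀ᵐ w ∂P, ∀ c, (1:ℝ) ≤ w c := by
      rw [ae_iff]
      have hsub2 : {w : Fin n → ℝ | ¬ ∀ c, (1:ℝ) ≤ w c} ⊆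
          ⋃ c, {w : Fin n → ℝ | w c ∈ Set.Iio 1} := by
        intro w hw
        push_neg at hw
        obtain ⟨c, hc⟩ := hw
        exact Set.mem_iUnion.mpr ⟨c, hc⟩
      refine measure_mono_null hsub2 (measure_iUnion_null fun c => ?_)
      rw [hPdef, pi_cylinder]
      exact hsupp
    filter_upwards [hGae] with w hwG
    rw [hmk w _ (hsm.inter htm)]
    by_cases hws : w i' * w j' < μ * n
    · have hsubA : Prod.mk w ⁻¹' (s ∩ t) ⊆
          {η : Fin n × Fin n → Bool | L n ≤ (cliquesThrough k η i' j' : ℝ)} := by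
        intro η hη
        exact hη.2.2
      refine le_trans (measure_mono hsubA) (le_trans (edge_prob_bound μ w hij' m' _ ?_) ?_)
      · intro η hη
        have hcard := card_ge hk hij' hL0 hη
        rw [hm'def]
        exact Nat.ceil_le.mpr hcard
      · refine Finset.sum_le_sum fun T _ => Finset.prod_le_prod' fun l _ => ?_
        have hwi : (1:ℝ) ≤ w i' := hwG i'
        have hwj : (1:ℝ) ≤ w j' := hwG j'
        have hwl : (1:ℝ) ≤ w l := hwG l
        have ha0 : (0:ℝ) ≤ w i' * w l / (μ * n) := by positivity
        have hb0 : (0:ℝ) ≤ w j' * w l / (μ * n) := by positivity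
        rw [← ENNReal.ofReal_mul (le_min ha0 zero_le_one)]
        apply ENNReal.ofReal_le_ofReal
        calc min (w i' * w l / (μ*n)) 1 * min (w j' * w l / (μ*n)) 1
            ≤ min ((w i' * w l / (μ*n)) * (w j' * w l / (μ*n))) 1 := min_mul_min_le ha0 hb0
          _ ≤ min ((w l)^2 / (μ*n)) 1 := by
              refine min_le_min ?_ le_rfl
              have key : (w i' * w l / (μ*n)) * (w j' * w l / (μ*n))
                  = ((w l)^2 / (μ*n)) * ((w i' * w j') / (μ*n)) := by ring
              rw [key]
              have hle1 : (w i' * w j') / (μ*n) ≤ 1 := by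
                rw [div_le_one hs0]
                exact le_of_lt hws
              have h20 : (0:ℝ) ≤ (w l)^2/(μ*n) := by positivity
              exact mul_le_of_le_one_right h20 hle1
    · have hempty : Prod.mk w ⁻¹' (s ∩ t) = ∅ := by
        ext η
        simp [hsdef, Set.mem_setOf_eq, hws]
      rw [hempty]
      simp
  -- integrate the bound
  have Hst : jointM ν μ n (s ∩ t) ≤ (N₂.card.choose m' : ℝ≥0∞) * Q ^ m' := by
    rw [hjm, bind_apply_ae hmeas (hsm.inter htm)]
    calc (∫⁻ w, f w (s ∩ t) ∂P)
        ≤ ∫⁻ w, ∑ T ∈ Finset.powersetCard m' N₂, ∏ l ∈ T, φ (w l) ∂P :=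
          lintegral_mono_ae hbnd
      _ = ∑ T ∈ Finset.powersetCard m' N₂, ∫⁻ w, ∏ l ∈ T, φ (w l) ∂P :=
          lintegral_finset_sum _ fun T _ =>
            Finset.measurable_prod _ fun l _ => hφm.comp (measurable_pi_apply l)
      _ = ∑ _T ∈ Finset.powersetCard m' N₂, Q ^ m' := by
          refine Finset.sum_congr rfl fun T hT => ?_
          have hTc : T.card = m' := (Finset.mem_powersetCard.mp hT).2
          have hfac := lintegral_pi_prod (ι := Fin n) ν
            (fun c x => if c ∈ T then φ x else 1)
            (fun c => by
              by_cases h : c ∈ T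
              · simpa only [if_pos h] using hφm
              · simp only [if_neg h]; exact measurable_const)
          calc ∫⁻ w, ∏ l ∈ T, φ (w l) ∂P
              = ∫⁻ w, ∏ c, (if c ∈ T then φ (w c) else 1) ∂P := by
                refine lintegral_congr fun w => ?_
                rw [Finset.prod_ite_mem Finset.univ T (fun c => φ (w c)),
                  Finset.univ_inter]
            _ = ∏ c, ∫⁻ x, (if c ∈ T then φ x else 1) ∂ν := hfac
            _ = ∏ c, (if c ∈ T then Q else 1) := by
                refine Finset.prod_congr rfl fun c _ => ?_
                split_ifs with h
                · exact hQdef.symm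
                · simp
            _ = Q ^ m' := by
                rw [Finset.prod_ite_mem Finset.univ T (fun _ => Q), Finset.univ_inter,
                  Finset.prod_const, hTc]
      _ = (Finset.powersetCard m' N₂).card • Q ^ m' := Finset.sum_const _
      _ = (N₂.card.choose m' : ℝ≥0∞) * Q ^ m' := by
          rw [Finset.card_powersetCard, nsmul_eq_mul]
  -- bound Q
  set q : ℝ := M * (μ * n) ^ (-(γ/2)) with hqdef
  have hMpos : (0:ℝ) < M := by linarith
  have hq0 : 0 ≤ q := by positivity
  have HQ : Q ≤ ENNReal.ofReal q := by
    rw [hQdef]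
    have hptw : ∀ᵐ x ∂ν, φ x ≤ ENNReal.ofReal ((μ*n) ^ (-(γ/2))) * ENNReal.ofReal (x ^ γ) := by
      filter_upwards [hae1] with x hx
      have hx0 : (0:ℝ) ≤ x := by linarith
      rw [hφdef, ← ENNReal.ofReal_mul (by positivity)]
      apply ENNReal.ofReal_le_ofReal
      have h1 : min (x^2/(μ*n)) 1 ≤ (x^2/(μ*n)) ^ (γ/2) :=
        min_le_rpow (by positivity) hγhalf0 hγhalf1
      have h2 : (x^2/(μ*n)) ^ (γ/2) = (μ*n) ^ (-(γ/2)) * x ^ γ := by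
        rw [Real.div_rpow (by positivity) hs0.le, ← Real.rpow_natCast x 2,
          ← Real.rpow_mul hx0, Real.rpow_neg hs0.le]
        push_cast
        rw [show (2:ℝ) * (γ/2) = γ by ring, div_eq_mul_inv, mul_comm]
      calc min (x^2/(μ*n)) 1 ≤ (x^2/(μ*n)) ^ (γ/2) := h1
        _ = (μ*n) ^ (-(γ/2)) * x ^ γ := h2
    calc (∫⁻ x, φ x ∂ν)
        ≤ ∫⁻ x, ENNReal.ofReal ((μ*n) ^ (-(γ/2))) * ENNReal.ofReal (x ^ γ) ∂ν :=
          lintegral_mono_ae hptw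
      _ = ENNReal.ofReal ((μ*n) ^ (-(γ/2))) * Mγ := by
          rw [lintegral_const_mul _ (by fun_prop), ← hMγdef]
      _ ≤ ENNReal.ofReal ((μ*n) ^ (-(γ/2))) * ENNReal.ofReal M := mul_le_mul_right hMγM _
      _ = ENNReal.ofReal q := by
          rw [← ENNReal.ofReal_mul (by positivity), hqdef, mul_comm]
  -- final assembly
  rw [ProbabilityTheory.cond_apply hsm, Hs]
  have hinv : (P s')⁻¹ ≤ ENNReal.ofReal 2 := by
    have h1 : (ENNReal.ofReal (1/2))⁻¹ = ENNReal.ofReal 2 := by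
      rw [show (1/2 : ℝ) = (2:ℝ)⁻¹ by norm_num, ENNReal.ofReal_inv_of_pos two_pos, inv_inv]
    rw [← h1]
    exact ENNReal.inv_le_inv' HsLB
  have hNn : N₂.card ≤ n := by
    calc N₂.card ≤ (Finset.univ : Finset (Fin n)).card := Finset.card_le_univ N₂
      _ = n := by simp
  have hkey : Real.exp 3 * ((n:ℝ) * q) ≤ (m' : ℝ) := by
    have heq : (n:ℝ) * q = M * μ ^ (-(γ/2)) * (n:ℝ) ^ (1 - γ/2) := by
      rw [hqdef, Real.mul_rpow hμpos.le hnR0.le,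
        show (1:ℝ) - γ/2 = 1 + -(γ/2) by ring, Real.rpow_add hnR0, Real.rpow_one]
      ring
    have h2 : (n:ℝ) ^ ((2-α)/2 + ε') ≤ m := by
      have h3 : ((n:ℝ) ^ ((2 - α) * ((k:ℝ) - 2) / 2 + ε)) ^ (1/((k:ℝ)-2)) ≤ m :=
        Real.rpow_le_rpow (Real.rpow_nonneg hnR0.le _) (le_of_lt (hL n)) (by positivity)
      rw [← Real.rpow_mul hnR0.le] at h3
      have hθe : ((2 - α) * ((k:ℝ) - 2) / 2 + ε) * (1/((k:ℝ)-2)) = (2-α)/2 + ε' := by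
        rw [hε'def]
        field_simp
      rwa [hθe] at h3
    calc Real.exp 3 * ((n:ℝ) * q)
        = Real.exp 3 * (M * μ ^ (-(γ/2))) * (n:ℝ) ^ (1-γ/2) := by rw [heq]; ring
      _ ≤ (n:ℝ) ^ ((2-α)/2 + ε') := hEV2
      _ ≤ m := h2
      _ ≤ (m' : ℝ) := hmm'
  calc (P s')⁻¹ * jointM ν μ n (s ∩ t)
      ≤ ENNReal.ofReal 2 * ((N₂.card.choose m' : ℝ≥0∞) * Q ^ m') :=
        mul_le_mul' hinv Hst
    _ ≤ ENNReal.ofReal 2 * (ENNReal.ofReal (N₂.card.choose m' : ℝ) *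
        ENNReal.ofReal q ^ m') := by
        refine mul_le_mul_right (mul_le_mul' ?_ (pow_le_pow_left' HQ m')) _
        rw [ENNReal.ofReal_natCast]
    _ = ENNReal.ofReal (2 * ((N₂.card.choose m' : ℝ) * q ^ m')) := by
        rw [← ENNReal.ofReal_pow hq0,
          ← ENNReal.ofReal_mul (p := ((N₂.card.choose m' : ℕ) : ℝ)) (Nat.cast_nonneg _),
          ← ENNReal.ofReal_mul (p := (2:ℝ)) (by norm_num)]
    _ ≤ ENNReal.ofReal (Real.exp (-(1 * m))) := by
        apply ENNReal.ofReal_le_ofReal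
        rw [one_mul]
        calc 2 * ((N₂.card.choose m' : ℝ) * q ^ m')
            = 2 * (N₂.card.choose m' : ℝ) * q ^ m' := by ring
          _ ≤ Real.exp (-m) := final_real_bound hq0 hm1 hmm' hm'1 hNn hkey
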